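/- The set {X ∈ 𝔤₂ : X maps span(e₁, e₂) into span(e₁, e₂)} is a Lie subalgebra of 𝔤₂ of dimension 4. (This is the infinitesimal stabilizer of an oriented 2-plane, a copy of 𝔲(2) inside 𝔤₂; it makes G₂ a principal U(2)-bundle over the oriented Grassmannian of 2-planes in ℝ⁷.) -/

import Mathlib

noncomputable section

open Matrix

/-- `3 × 3` determinant of coordinates `a, b, c` of `(x, y, z)`. -/
def det3 (a b c : Fin 7) (x y z : Fin 7 → ℝ) : ℝ :=
  x a * (y b * z c - y c * z b) - x b * (y a * z c - y c * z a) +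
    x c * (y a * z b - y b * z a)

/-- The associative calibration `φ` of Harvey–Lawson on `ℝ⁷`. -/
def phi (x y z : Fin 7 → ℝ) : ℝ :=
  det3 4 5 6 x y z - det3 4 0 1 x y z - det3 4 2 3 x y z -
    det3 5 0 2 x y z - det3 5 3 1 x y z - det3 6 0 3 x y z - det3 6 1 2 x y z

/-- `𝔤₂`: the skew-symmetric `7 × 7` real matrices infinitesimally
stabilizing `φ`. -/
def g2 : Set (Matrix (Fin 7) (Fin 7) ℝ) :=
  {X | Xᵀ = -X ∧ ∀ u v w : Fin 7 → ℝ,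
    phi (X *ᵥ u) v w + phi u (X *ᵥ v) w + phi u v (X *ᵥ w) = 0}

/-- The oriented 2-plane `span(e₁, e₂)`: the vectors `(x₁,x₂,0,0,0,0,0)`. -/
def plane12 : Set (Fin 7 → ℝ) :=
  {x | x 2 = 0 ∧ x 3 = 0 ∧ x 4 = 0 ∧ x 5 = 0 ∧ x 6 = 0}

def M1 : Matrix (Fin 7) (Fin 7) ℝ :=
  !![0,-1,0,0,0,0,0;
     1,0,0,0,0,0,0;
     0,0,0,1,0,0,0;
     0,0,-1,0,0,0,0;
     0,0,0,0,0,0,0;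
     0,0,0,0,0,0,0;
     0,0,0,0,0,0,0]

def M2 : Matrix (Fin 7) (Fin 7) ℝ :=
  !![0,0,0,0,0,0,0;
     0,0,0,0,0,0,0;
     0,0,0,0,0,0,1;
     0,0,0,0,0,1,0;
     0,0,0,0,0,0,0;
     0,0,0,-1,0,0,0;
     0,0,-1,0,0,0,0]

def M3 : Matrix (Fin 7) (Fin 7) ℝ :=
  !![0,0,0,0,0,0,0;
     0,0,0,0,0,0,0;
     0,0,0,0,0,-1,0;
     0,0,0,0,0,0,1;
     0,0,0,0,0,0,0;
     0,0,1,0,0,0,0;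
     0,0,0,-1,0,0,0]

def M4 : Matrix (Fin 7) (Fin 7) ℝ :=
  !![0,1,0,0,0,0,0;
     -1,0,0,0,0,0,0;
     0,0,0,0,0,0,0;
     0,0,0,0,0,0,0;
     0,0,0,0,0,0,0;
     0,0,0,0,0,0,1;
     0,0,0,0,0,-1,0]

lemma M1v0 (u : Fin 7 → ℝ) : (M1 *ᵥ u) 0 = -u 1 := by
  simp only [mulVec, dotProduct, Fin.sum_univ_seven, show M1 0 0 = 0 from rfl, show M1 0 1 = -1 from rfl, show M1 0 2 = 0 from rfl, show M1 0 3 = 0 from rfl, show M1 0 4 = 0 from rfl, show M1 0 5 = 0 from rfl, show M1 0 6 = 0 from rfl]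
  ring

lemma M1v1 (u : Fin 7 → ℝ) : (M1 *ᵥ u) 1 = u 0 := by
  simp only [mulVec, dotProduct, Fin.sum_univ_seven, show M1 1 0 = 1 from rfl, show M1 1 1 = 0 from rfl, show M1 1 2 = 0 from rfl, show M1 1 3 = 0 from rfl, show M1 1 4 = 0 from rfl, show M1 1 5 = 0 from rfl, show M1 1 6 = 0 from rfl]
  ring

lemma M1v2 (u : Fin 7 → ℝ) : (M1 *ᵥ u) 2 = u 3 := by
  simp only [mulVec, dotProduct, Fin.sum_univ_seven, show M1 2 0 = 0 from rfl, show M1 2 1 = 0 from rfl, show M1 2 2 = 0 from rfl, show M1 2 3 = 1 from rfl, show M1 2 4 = 0 from rfl, show M1 2 5 = 0 from rfl, show M1 2 6 = 0 from rfl]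
  ring

lemma M1v3 (u : Fin 7 → ℝ) : (M1 *ᵥ u) 3 = -u 2 := by
  simp only [mulVec, dotProduct, Fin.sum_univ_seven, show M1 3 0 = 0 from rfl, show M1 3 1 = 0 from rfl, show M1 3 2 = -1 from rfl, show M1 3 3 = 0 from rfl, show M1 3 4 = 0 from rfl, show M1 3 5 = 0 from rfl, show M1 3 6 = 0 from rfl]
  ring

lemma M1v4 (u : Fin 7 → ℝ) : (M1 *ᵥ u) 4 = 0 := by
  simp only [mulVec, dotProduct, Fin.sum_univ_seven, show M1 4 0 = 0 from rfl, show M1 4 1 = 0 from rfl, show M1 4 2 = 0 from rfl, show M1 4 3 = 0 from rfl, show M1 4 4 = 0 from rfl, show M1 4 5 = 0 from rfl, show M1 4 6 = 0 from rfl]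
  ring

lemma M1v5 (u : Fin 7 → ℝ) : (M1 *ᵥ u) 5 = 0 := by
  simp only [mulVec, dotProduct, Fin.sum_univ_seven, show M1 5 0 = 0 from rfl, show M1 5 1 = 0 from rfl, show M1 5 2 = 0 from rfl, show M1 5 3 = 0 from rfl, show M1 5 4 = 0 from rfl, show M1 5 5 = 0 from rfl, show M1 5 6 = 0 from rfl]
  ring

lemma M1v6 (u : Fin 7 → ℝ) : (M1 *ᵥ u) 6 = 0 := by
  simp only [mulVec, dotProduct, Fin.sum_univ_seven, show M1 6 0 = 0 from rfl, show M1 6 1 = 0 from rfl, show M1 6 2 = 0 from rfl, show M1 6 3 = 0 from rfl, show M1 6 4 = 0 from rfl, show M1 6 5 = 0 from rfl, show M1 6 6 = 0 from rfl]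
  ring

lemma M2v0 (u : Fin 7 → ℝ) : (M2 *ᵥ u) 0 = 0 := by
  simp only [mulVec, dotProduct, Fin.sum_univ_seven, show M2 0 0 = 0 from rfl, show M2 0 1 = 0 from rfl, show M2 0 2 = 0 from rfl, show M2 0 3 = 0 from rfl, show M2 0 4 = 0 from rfl, show M2 0 5 = 0 from rfl, show M2 0 6 = 0 from rfl]
  ring

lemma M2v1 (u : Fin 7 → ℝ) : (M2 *ᵥ u) 1 = 0 := by
  simp only [mulVec, dotProduct, Fin.sum_univ_seven, show M2 1 0 = 0 from rfl, show M2 1 1 = 0 from rfl, show M2 1 2 = 0 from rfl, show M2 1 3 = 0 from rfl, show M2 1 4 = 0 from rfl, show M2 1 5 = 0 from rfl, show M2 1 6 = 0 from rfl]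
  ring

lemma M2v2 (u : Fin 7 → ℝ) : (M2 *ᵥ u) 2 = u 6 := by
  simp only [mulVec, dotProduct, Fin.sum_univ_seven, show M2 2 0 = 0 from rfl, show M2 2 1 = 0 from rfl, show M2 2 2 = 0 from rfl, show M2 2 3 = 0 from rfl, show M2 2 4 = 0 from rfl, show M2 2 5 = 0 from rfl, show M2 2 6 = 1 from rfl]
  ring

lemma M2v3 (u : Fin 7 → ℝ) : (M2 *ᵥ u) 3 = u 5 := by
  simp only [mulVec, dotProduct, Fin.sum_univ_seven, show M2 3 0 = 0 from rfl, show M2 3 1 = 0 from rfl, show M2 3 2 = 0 from rfl, show M2 3 3 = 0 from rfl, show M2 3 4 = 0 from rfl, show M2 3 5 = 1 from rfl, show M2 3 6 = 0 from rfl]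
  ring

lemma M2v4 (u : Fin 7 → ℝ) : (M2 *ᵥ u) 4 = 0 := by
  simp only [mulVec, dotProduct, Fin.sum_univ_seven, show M2 4 0 = 0 from rfl, show M2 4 1 = 0 from rfl, show M2 4 2 = 0 from rfl, show M2 4 3 = 0 from rfl, show M2 4 4 = 0 from rfl, show M2 4 5 = 0 from rfl, show M2 4 6 = 0 from rfl]
  ring

lemma M2v5 (u : Fin 7 → ℝ) : (M2 *ᵥ u) 5 = -u 3 := by
  simp only [mulVec, dotProduct, Fin.sum_univ_seven, show M2 5 0 = 0 from rfl, show M2 5 1 = 0 from rfl, show M2 5 2 = 0 from rfl, show M2 5 3 = -1 from rfl, show M2 5 4 = 0 from rfl, show M2 5 5 = 0 from rfl, show M2 5 6 = 0 from rfl]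
  ring

lemma M2v6 (u : Fin 7 → ℝ) : (M2 *ᵥ u) 6 = -u 2 := by
  simp only [mulVec, dotProduct, Fin.sum_univ_seven, show M2 6 0 = 0 from rfl, show M2 6 1 = 0 from rfl, show M2 6 2 = -1 from rfl, show M2 6 3 = 0 from rfl, show M2 6 4 = 0 from rfl, show M2 6 5 = 0 from rfl, show M2 6 6 = 0 from rfl]
  ring

lemma M3v0 (u : Fin 7 → ℝ) : (M3 *ᵥ u) 0 = 0 := by
  simp only [mulVec, dotProduct, Fin.sum_univ_seven, show M3 0 0 = 0 from rfl, show M3 0 1 = 0 from rfl, show M3 0 2 = 0 from rfl, show M3 0 3 = 0 from rfl, show M3 0 4 = 0 from rfl, show M3 0 5 = 0 from rfl, show M3 0 6 = 0 from rfl]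
  ring

lemma M3v1 (u : Fin 7 → ℝ) : (M3 *ᵥ u) 1 = 0 := by
  simp only [mulVec, dotProduct, Fin.sum_univ_seven, show M3 1 0 = 0 from rfl, show M3 1 1 = 0 from rfl, show M3 1 2 = 0 from rfl, show M3 1 3 = 0 from rfl, show M3 1 4 = 0 from rfl, show M3 1 5 = 0 from rfl, show M3 1 6 = 0 from rfl]
  ring

lemma M3v2 (u : Fin 7 → ℝ) : (M3 *ᵥ u) 2 = -u 5 := by
  simp only [mulVec, dotProduct, Fin.sum_univ_seven, show M3 2 0 = 0 from rfl, show M3 2 1 = 0 from rfl, show M3 2 2 = 0 from rfl, show M3 2 3 = 0 from rfl, show M3 2 4 = 0 from rfl, show M3 2 5 = -1 from rfl, show M3 2 6 = 0 from rfl]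
  ring

lemma M3v3 (u : Fin 7 → ℝ) : (M3 *ᵥ u) 3 = u 6 := by
  simp only [mulVec, dotProduct, Fin.sum_univ_seven, show M3 3 0 = 0 from rfl, show M3 3 1 = 0 from rfl, show M3 3 2 = 0 from rfl, show M3 3 3 = 0 from rfl, show M3 3 4 = 0 from rfl, show M3 3 5 = 0 from rfl, show M3 3 6 = 1 from rfl]
  ring

lemma M3v4 (u : Fin 7 → ℝ) : (M3 *ᵥ u) 4 = 0 := by
  simp only [mulVec, dotProduct, Fin.sum_univ_seven, show M3 4 0 = 0 from rfl, show M3 4 1 = 0 from rfl, show M3 4 2 = 0 from rfl, show M3 4 3 = 0 from rfl, show M3 4 4 = 0 from rfl, show M3 4 5 = 0 from rfl, show M3 4 6 = 0 from rfl]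
  ring

lemma M3v5 (u : Fin 7 → ℝ) : (M3 *ᵥ u) 5 = u 2 := by
  simp only [mulVec, dotProduct, Fin.sum_univ_seven, show M3 5 0 = 0 from rfl, show M3 5 1 = 0 from rfl, show M3 5 2 = 1 from rfl, show M3 5 3 = 0 from rfl, show M3 5 4 = 0 from rfl, show M3 5 5 = 0 from rfl, show M3 5 6 = 0 from rfl]
  ring

lemma M3v6 (u : Fin 7 → ℝ) : (M3 *ᵥ u) 6 = -u 3 := by
  simp only [mulVec, dotProduct, Fin.sum_univ_seven, show M3 6 0 = 0 from rfl, show M3 6 1 = 0 from rfl, show M3 6 2 = 0 from rfl, show M3 6 3 = -1 from rfl, show M3 6 4 = 0 from rfl, show M3 6 5 = 0 from rfl, show M3 6 6 = 0 from rfl]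
  ring

lemma M4v0 (u : Fin 7 → ℝ) : (M4 *ᵥ u) 0 = u 1 := by
  simp only [mulVec, dotProduct, Fin.sum_univ_seven, show M4 0 0 = 0 from rfl, show M4 0 1 = 1 from rfl, show M4 0 2 = 0 from rfl, show M4 0 3 = 0 from rfl, show M4 0 4 = 0 from rfl, show M4 0 5 = 0 from rfl, show M4 0 6 = 0 from rfl]
  ring

lemma M4v1 (u : Fin 7 → ℝ) : (M4 *ᵥ u) 1 = -u 0 := by
  simp only [mulVec, dotProduct, Fin.sum_univ_seven, show M4 1 0 = -1 from rfl, show M4 1 1 = 0 from rfl, show M4 1 2 = 0 from rfl, show M4 1 3 = 0 from rfl, show M4 1 4 = 0 from rfl, show M4 1 5 = 0 from rfl, show M4 1 6 = 0 from rfl]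
  ring

lemma M4v2 (u : Fin 7 → ℝ) : (M4 *ᵥ u) 2 = 0 := by
  simp only [mulVec, dotProduct, Fin.sum_univ_seven, show M4 2 0 = 0 from rfl, show M4 2 1 = 0 from rfl, show M4 2 2 = 0 from rfl, show M4 2 3 = 0 from rfl, show M4 2 4 = 0 from rfl, show M4 2 5 = 0 from rfl, show M4 2 6 = 0 from rfl]
  ring

lemma M4v3 (u : Fin 7 → ℝ) : (M4 *ᵥ u) 3 = 0 := by
  simp only [mulVec, dotProduct, Fin.sum_univ_seven, show M4 3 0 = 0 from rfl, show M4 3 1 = 0 from rfl, show M4 3 2 = 0 from rfl, show M4 3 3 = 0 from rfl, show M4 3 4 = 0 from rfl, show M4 3 5 = 0 from rfl, show M4 3 6 = 0 from rfl]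
  ring

lemma M4v4 (u : Fin 7 → ℝ) : (M4 *ᵥ u) 4 = 0 := by
  simp only [mulVec, dotProduct, Fin.sum_univ_seven, show M4 4 0 = 0 from rfl, show M4 4 1 = 0 from rfl, show M4 4 2 = 0 from rfl, show M4 4 3 = 0 from rfl, show M4 4 4 = 0 from rfl, show M4 4 5 = 0 from rfl, show M4 4 6 = 0 from rfl]
  ring

lemma M4v5 (u : Fin 7 → ℝ) : (M4 *ᵥ u) 5 = u 6 := by
  simp only [mulVec, dotProduct, Fin.sum_univ_seven, show M4 5 0 = 0 from rfl, show M4 5 1 = 0 from rfl, show M4 5 2 = 0 from rfl, show M4 5 3 = 0 from rfl, show M4 5 4 = 0 from rfl, show M4 5 5 = 0 from rfl, show M4 5 6 = 1 from rfl]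
  ring

lemma M4v6 (u : Fin 7 → ℝ) : (M4 *ᵥ u) 6 = -u 5 := by
  simp only [mulVec, dotProduct, Fin.sum_univ_seven, show M4 6 0 = 0 from rfl, show M4 6 1 = 0 from rfl, show M4 6 2 = 0 from rfl, show M4 6 3 = 0 from rfl, show M4 6 4 = 0 from rfl, show M4 6 5 = -1 from rfl, show M4 6 6 = 0 from rfl]
  ring

lemma M1T : M1ᵀ = -M1 := by
  ext i j
  fin_cases i <;> fin_cases j <;> norm_num [M1]

lemma M2T : M2ᵀ = -M2 := by
  ext i j
  fin_cases i <;> fin_cases j <;> norm_num [M2]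

lemma M3T : M3ᵀ = -M3 := by
  ext i j
  fin_cases i <;> fin_cases j <;> norm_num [M3]

lemma M4T : M4ᵀ = -M4 := by
  ext i j
  fin_cases i <;> fin_cases j <;> norm_num [M4]

lemma phi_add1 (x x' y z : Fin 7 → ℝ) : phi (x + x') y z = phi x y z + phi x' y z := by
  simp only [phi, det3, Pi.add_apply]; ring
lemma phi_add2 (x y y' z : Fin 7 → ℝ) : phi x (y + y') z = phi x y z + phi x y' z := by
  simp only [phi, det3, Pi.add_apply]; ring
lemma phi_add3 (x y z z' : Fin 7 → ℝ) : phi x y (z + z') = phi x y z + phi x y z' := by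
  simp only [phi, det3, Pi.add_apply]; ring
lemma phi_sub1 (x x' y z : Fin 7 → ℝ) : phi (x - x') y z = phi x y z - phi x' y z := by
  simp only [phi, det3, Pi.sub_apply]; ring
lemma phi_sub2 (x y y' z : Fin 7 → ℝ) : phi x (y - y') z = phi x y z - phi x y' z := by
  simp only [phi, det3, Pi.sub_apply]; ring
lemma phi_sub3 (x y z z' : Fin 7 → ℝ) : phi x y (z - z') = phi x y z - phi x y z' := by
  simp only [phi, det3, Pi.sub_apply]; ring
lemma phi_smul1 (a : ℝ) (x y z : Fin 7 → ℝ) : phi (a • x) y z = a * phi x y z := by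
  simp only [phi, det3, Pi.smul_apply, smul_eq_mul]; ring
lemma phi_smul2 (a : ℝ) (x y z : Fin 7 → ℝ) : phi x (a • y) z = a * phi x y z := by
  simp only [phi, det3, Pi.smul_apply, smul_eq_mul]; ring
lemma phi_smul3 (a : ℝ) (x y z : Fin 7 → ℝ) : phi x y (a • z) = a * phi x y z := by
  simp only [phi, det3, Pi.smul_apply, smul_eq_mul]; ring

/-- The derivation property is preserved by sums. -/
lemma phiD_add (X Y : Matrix (Fin 7) (Fin 7) ℝ)
    (hX : ∀ u v w, phi (X *ᵥ u) v w + phi u (X *ᵥ v) w + phi u v (X *ᵥ w) = 0)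
    (hY : ∀ u v w, phi (Y *ᵥ u) v w + phi u (Y *ᵥ v) w + phi u v (Y *ᵥ w) = 0) :
    ∀ u v w, phi ((X + Y) *ᵥ u) v w + phi u ((X + Y) *ᵥ v) w + phi u v ((X + Y) *ᵥ w) = 0 := by
  intro u v w
  rw [add_mulVec, add_mulVec, add_mulVec, phi_add1, phi_add2, phi_add3]
  linarith [hX u v w, hY u v w]

lemma phiD_smul (a : ℝ) (X : Matrix (Fin 7) (Fin 7) ℝ)
    (hX : ∀ u v w, phi (X *ᵥ u) v w + phi u (X *ᵥ v) w + phi u v (X *ᵥ w) = 0) :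
    ∀ u v w, phi ((a • X) *ᵥ u) v w + phi u ((a • X) *ᵥ v) w + phi u v ((a • X) *ᵥ w) = 0 := by
  intro u v w
  rw [smul_mulVec, smul_mulVec, smul_mulVec,
    phi_smul1, phi_smul2, phi_smul3]
  linear_combination a * hX u v w

lemma M1phi : ∀ u v w, phi (M1 *ᵥ u) v w + phi u (M1 *ᵥ v) w + phi u v (M1 *ᵥ w) = 0 := by
  intro u v w
  simp only [phi, det3, M1v0, M1v1, M1v2, M1v3, M1v4, M1v5, M1v6]
  ring

lemma M2phi : ∀ u v w, phi (M2 *ᵥ u) v w + phi u (M2 *ᵥ v) w + phi u v (M2 *ᵥ w) = 0 := by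
  intro u v w
  simp only [phi, det3, M2v0, M2v1, M2v2, M2v3, M2v4, M2v5, M2v6]
  ring

lemma M3phi : ∀ u v w, phi (M3 *ᵥ u) v w + phi u (M3 *ᵥ v) w + phi u v (M3 *ᵥ w) = 0 := by
  intro u v w
  simp only [phi, det3, M3v0, M3v1, M3v2, M3v3, M3v4, M3v5, M3v6]
  ring

lemma M4phi : ∀ u v w, phi (M4 *ᵥ u) v w + phi u (M4 *ᵥ v) w + phi u v (M4 *ᵥ w) = 0 := by
  intro u v w
  simp only [phi, det3, M4v0, M4v1, M4v2, M4v3, M4v4, M4v5, M4v6]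
  ring


set_option maxHeartbeats 4000000

/-- The elements of `𝔤₂` mapping `span(e₁, e₂)` into itself form a Lie
subalgebra of `𝔤₂` of dimension `4` (the infinitesimal stabilizer of an
oriented 2-plane, a copy of `𝔲(2)`; it makes `G₂` a principal
`U(2)`-bundle over the oriented Grassmannian of 2-planes in `ℝ⁷`). -/
theorem g2_stab_plane_dim_4 :
    ∃ S : Submodule ℝ (Matrix (Fin 7) (Fin 7) ℝ),
      (S : Set (Matrix (Fin 7) (Fin 7) ℝ)) =
        {X ∈ g2 | ∀ x ∈ plane12, X *ᵥ x ∈ plane12} ∧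
      (∀ X ∈ S, ∀ Y ∈ S, X * Y - Y * X ∈ S) ∧
      Module.finrank ℝ S = 4 := by
  have hset : ((Submodule.span ℝ (Set.range ![M1, M2, M3, M4]) :
      Submodule ℝ (Matrix (Fin 7) (Fin 7) ℝ)) : Set (Matrix (Fin 7) (Fin 7) ℝ)) =
      {X ∈ g2 | ∀ x ∈ plane12, X *ᵥ x ∈ plane12} := by
    ext X
    rw [SetLike.mem_coe, Submodule.mem_span_range_iff_exists_fun]
    constructor
    · rintro ⟨cf, rfl⟩
      rw [Fin.sum_univ_four]
      simp only [Matrix.cons_val_zero, Matrix.cons_val_one, Matrix.head_cons,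
        Matrix.cons_val_two, Matrix.tail_cons, Matrix.cons_val_three]
      set a := cf 0; set b := cf 1; set c := cf 2; set d := cf 3
      refine ⟨⟨?_, ?_⟩, ?_⟩
      · -- skew
        rw [transpose_add, transpose_add, transpose_add,
          transpose_smul, transpose_smul, transpose_smul, transpose_smul,
          M1T, M2T, M3T, M4T]
        module
      · -- derivation property
        exact phiD_add _ _ (phiD_add _ _ (phiD_add _ _ (phiD_smul a M1 M1phi)
          (phiD_smul b M2 M2phi)) (phiD_smul c M3 M3phi)) (phiD_smul d M4 M4phi)
      · -- plane preservation
        rintro x ⟨h2, h3, h4, h5, h6⟩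
        rw [add_mulVec, add_mulVec, add_mulVec,
          smul_mulVec, smul_mulVec, smul_mulVec, smul_mulVec]
        refine ⟨?_, ?_, ?_, ?_, ?_⟩ <;>
          simp only [Pi.add_apply, Pi.smul_apply, smul_eq_mul,
            M1v2, M1v3, M1v4, M1v5, M1v6, M2v2, M2v3, M2v4, M2v5, M2v6,
            M3v2, M3v3, M3v4, M3v5, M3v6, M4v2, M4v3, M4v4, M4v5, M4v6,
            h2, h3, h4, h5, h6] <;> ring
    · rintro ⟨⟨hT, hphi⟩, hpl⟩
      have hs : ∀ i j, X j i = -X i j := fun i j => by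
        simpa using congrFun (congrFun hT i) j
      have p0 := hpl (Pi.single 0 1) (by
        refine ⟨?_, ?_, ?_, ?_, ?_⟩ <;> simp [Pi.single_apply])
      have p1 := hpl (Pi.single 1 1) (by
        refine ⟨?_, ?_, ?_, ?_, ?_⟩ <;> simp [Pi.single_apply])
      obtain ⟨q02, q03, q04, q05, q06⟩ := p0
      obtain ⟨q12, q13, q14, q15, q16⟩ := p1
      simp only [mulVec_single, Pi.smul_apply, op_smul_eq_mul, col_apply, mul_one] at q02 q03 q04 q05 q06 q12 q13 q14 q15 q16
      have E1 := hphi (Pi.single 0 1) (Pi.single 1 1) (Pi.single 2 1)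
      have E2 := hphi (Pi.single 0 1) (Pi.single 1 1) (Pi.single 3 1)
      have E3 := hphi (Pi.single 0 1) (Pi.single 1 1) (Pi.single 5 1)
      have E4 := hphi (Pi.single 0 1) (Pi.single 1 1) (Pi.single 6 1)
      have E5 := hphi (Pi.single 0 1) (Pi.single 2 1) (Pi.single 3 1)
      have E6 := hphi (Pi.single 0 1) (Pi.single 2 1) (Pi.single 6 1)
      have E7 := hphi (Pi.single 1 1) (Pi.single 2 1) (Pi.single 3 1)
      simp [phi, det3, mulVec_single, Pi.single_apply] at E1 E2 E3 E4 E5 E6 E7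
      have s01 := hs 0 1; have s23 := hs 2 3; have s25 := hs 2 5; have s26 := hs 2 6
      have s35 := hs 3 5; have s36 := hs 3 6; have s56 := hs 5 6
      have s24 := hs 2 4; have s34 := hs 3 4; have s45 := hs 4 5; have s46 := hs 4 6
      have s02 := hs 0 2; have s03 := hs 0 3; have s04 := hs 0 4; have s05 := hs 0 5
      have s06 := hs 0 6; have s12 := hs 1 2; have s13 := hs 1 3; have s14 := hs 1 4
      have s15 := hs 1 5; have s16 := hs 1 6
      have d0 := hs 0 0; have d1 := hs 1 1; have d2 := hs 2 2; have d3 := hs 3 3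
      have d4 := hs 4 4; have d5 := hs 5 5; have d6 := hs 6 6
      refine ⟨![X 2 3, X 2 6, -X 2 5, X 5 6], ?_⟩
      rw [Fin.sum_univ_four]
      simp only [Matrix.cons_val_zero, Matrix.cons_val_one, Matrix.head_cons,
        Matrix.cons_val_two, Matrix.tail_cons, Matrix.cons_val_three]
      ext i j
      fin_cases i <;> fin_cases j <;>
        simp only [Fin.reduceFinMk, Matrix.add_apply, Matrix.smul_apply, smul_eq_mul,
          show M1 0 0 = (0:ℝ) from rfl,
          show M1 0 1 = (-1:ℝ) from rfl,
          show M1 0 2 = (0:ℝ) from rfl,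
          show M1 0 3 = (0:ℝ) from rfl,
          show M1 0 4 = (0:ℝ) from rfl,
          show M1 0 5 = (0:ℝ) from rfl,
          show M1 0 6 = (0:ℝ) from rfl,
          show M1 1 0 = (1:ℝ) from rfl,
          show M1 1 1 = (0:ℝ) from rfl,
          show M1 1 2 = (0:ℝ) from rfl,
          show M1 1 3 = (0:ℝ) from rfl,
          show M1 1 4 = (0:ℝ) from rfl,
          show M1 1 5 = (0:ℝ) from rfl,
          show M1 1 6 = (0:ℝ) from rfl,
          show M1 2 0 = (0:ℝ) from rfl,
          show M1 2 1 = (0:ℝ) from rfl,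
          show M1 2 2 = (0:ℝ) from rfl,
          show M1 2 3 = (1:ℝ) from rfl,
          show M1 2 4 = (0:ℝ) from rfl,
          show M1 2 5 = (0:ℝ) from rfl,
          show M1 2 6 = (0:ℝ) from rfl,
          show M1 3 0 = (0:ℝ) from rfl,
          show M1 3 1 = (0:ℝ) from rfl,
          show M1 3 2 = (-1:ℝ) from rfl,
          show M1 3 3 = (0:ℝ) from rfl,
          show M1 3 4 = (0:ℝ) from rfl,
          show M1 3 5 = (0:ℝ) from rfl,
          show M1 3 6 = (0:ℝ) from rfl,
          show M1 4 0 = (0:ℝ) from rfl,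
          show M1 4 1 = (0:ℝ) from rfl,
          show M1 4 2 = (0:ℝ) from rfl,
          show M1 4 3 = (0:ℝ) from rfl,
          show M1 4 4 = (0:ℝ) from rfl,
          show M1 4 5 = (0:ℝ) from rfl,
          show M1 4 6 = (0:ℝ) from rfl,
          show M1 5 0 = (0:ℝ) from rfl,
          show M1 5 1 = (0:ℝ) from rfl,
          show M1 5 2 = (0:ℝ) from rfl,
          show M1 5 3 = (0:ℝ) from rfl,
          show M1 5 4 = (0:ℝ) from rfl,
          show M1 5 5 = (0:ℝ) from rfl,
          show M1 5 6 = (0:ℝ) from rfl,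
          show M1 6 0 = (0:ℝ) from rfl,
          show M1 6 1 = (0:ℝ) from rfl,
          show M1 6 2 = (0:ℝ) from rfl,
          show M1 6 3 = (0:ℝ) from rfl,
          show M1 6 4 = (0:ℝ) from rfl,
          show M1 6 5 = (0:ℝ) from rfl,
          show M1 6 6 = (0:ℝ) from rfl,
          show M2 0 0 = (0:ℝ) from rfl,
          show M2 0 1 = (0:ℝ) from rfl,
          show M2 0 2 = (0:ℝ) from rfl,
          show M2 0 3 = (0:ℝ) from rfl,
          show M2 0 4 = (0:ℝ) from rfl,
          show M2 0 5 = (0:ℝ) from rfl,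
          show M2 0 6 = (0:ℝ) from rfl,
          show M2 1 0 = (0:ℝ) from rfl,
          show M2 1 1 = (0:ℝ) from rfl,
          show M2 1 2 = (0:ℝ) from rfl,
          show M2 1 3 = (0:ℝ) from rfl,
          show M2 1 4 = (0:ℝ) from rfl,
          show M2 1 5 = (0:ℝ) from rfl,
          show M2 1 6 = (0:ℝ) from rfl,
          show M2 2 0 = (0:ℝ) from rfl,
          show M2 2 1 = (0:ℝ) from rfl,
          show M2 2 2 = (0:ℝ) from rfl,
          show M2 2 3 = (0:ℝ) from rfl,
          show M2 2 4 = (0:ℝ) from rfl,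
          show M2 2 5 = (0:ℝ) from rfl,
          show M2 2 6 = (1:ℝ) from rfl,
          show M2 3 0 = (0:ℝ) from rfl,
          show M2 3 1 = (0:ℝ) from rfl,
          show M2 3 2 = (0:ℝ) from rfl,
          show M2 3 3 = (0:ℝ) from rfl,
          show M2 3 4 = (0:ℝ) from rfl,
          show M2 3 5 = (1:ℝ) from rfl,
          show M2 3 6 = (0:ℝ) from rfl,
          show M2 4 0 = (0:ℝ) from rfl,
          show M2 4 1 = (0:ℝ) from rfl,
          show M2 4 2 = (0:ℝ) from rfl,
          show M2 4 3 = (0:ℝ) from rfl,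
          show M2 4 4 = (0:ℝ) from rfl,
          show M2 4 5 = (0:ℝ) from rfl,
          show M2 4 6 = (0:ℝ) from rfl,
          show M2 5 0 = (0:ℝ) from rfl,
          show M2 5 1 = (0:ℝ) from rfl,
          show M2 5 2 = (0:ℝ) from rfl,
          show M2 5 3 = (-1:ℝ) from rfl,
          show M2 5 4 = (0:ℝ) from rfl,
          show M2 5 5 = (0:ℝ) from rfl,
          show M2 5 6 = (0:ℝ) from rfl,
          show M2 6 0 = (0:ℝ) from rfl,
          show M2 6 1 = (0:ℝ) from rfl,
          show M2 6 2 = (-1:ℝ) from rfl,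
          show M2 6 3 = (0:ℝ) from rfl,
          show M2 6 4 = (0:ℝ) from rfl,
          show M2 6 5 = (0:ℝ) from rfl,
          show M2 6 6 = (0:ℝ) from rfl,
          show M3 0 0 = (0:ℝ) from rfl,
          show M3 0 1 = (0:ℝ) from rfl,
          show M3 0 2 = (0:ℝ) from rfl,
          show M3 0 3 = (0:ℝ) from rfl,
          show M3 0 4 = (0:ℝ) from rfl,
          show M3 0 5 = (0:ℝ) from rfl,
          show M3 0 6 = (0:ℝ) from rfl,
          show M3 1 0 = (0:ℝ) from rfl,
          show M3 1 1 = (0:ℝ) from rfl,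
          show M3 1 2 = (0:ℝ) from rfl,
          show M3 1 3 = (0:ℝ) from rfl,
          show M3 1 4 = (0:ℝ) from rfl,
          show M3 1 5 = (0:ℝ) from rfl,
          show M3 1 6 = (0:ℝ) from rfl,
          show M3 2 0 = (0:ℝ) from rfl,
          show M3 2 1 = (0:ℝ) from rfl,
          show M3 2 2 = (0:ℝ) from rfl,
          show M3 2 3 = (0:ℝ) from rfl,
          show M3 2 4 = (0:ℝ) from rfl,
          show M3 2 5 = (-1:ℝ) from rfl,
          show M3 2 6 = (0:ℝ) from rfl,
          show M3 3 0 = (0:ℝ) from rfl,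
          show M3 3 1 = (0:ℝ) from rfl,
          show M3 3 2 = (0:ℝ) from rfl,
          show M3 3 3 = (0:ℝ) from rfl,
          show M3 3 4 = (0:ℝ) from rfl,
          show M3 3 5 = (0:ℝ) from rfl,
          show M3 3 6 = (1:ℝ) from rfl,
          show M3 4 0 = (0:ℝ) from rfl,
          show M3 4 1 = (0:ℝ) from rfl,
          show M3 4 2 = (0:ℝ) from rfl,
          show M3 4 3 = (0:ℝ) from rfl,
          show M3 4 4 = (0:ℝ) from rfl,
          show M3 4 5 = (0:ℝ) from rfl,
          show M3 4 6 = (0:ℝ) from rfl,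
          show M3 5 0 = (0:ℝ) from rfl,
          show M3 5 1 = (0:ℝ) from rfl,
          show M3 5 2 = (1:ℝ) from rfl,
          show M3 5 3 = (0:ℝ) from rfl,
          show M3 5 4 = (0:ℝ) from rfl,
          show M3 5 5 = (0:ℝ) from rfl,
          show M3 5 6 = (0:ℝ) from rfl,
          show M3 6 0 = (0:ℝ) from rfl,
          show M3 6 1 = (0:ℝ) from rfl,
          show M3 6 2 = (0:ℝ) from rfl,
          show M3 6 3 = (-1:ℝ) from rfl,
          show M3 6 4 = (0:ℝ) from rfl,
          show M3 6 5 = (0:ℝ) from rfl,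
          show M3 6 6 = (0:ℝ) from rfl,
          show M4 0 0 = (0:ℝ) from rfl,
          show M4 0 1 = (1:ℝ) from rfl,
          show M4 0 2 = (0:ℝ) from rfl,
          show M4 0 3 = (0:ℝ) from rfl,
          show M4 0 4 = (0:ℝ) from rfl,
          show M4 0 5 = (0:ℝ) from rfl,
          show M4 0 6 = (0:ℝ) from rfl,
          show M4 1 0 = (-1:ℝ) from rfl,
          show M4 1 1 = (0:ℝ) from rfl,
          show M4 1 2 = (0:ℝ) from rfl,
          show M4 1 3 = (0:ℝ) from rfl,
          show M4 1 4 = (0:ℝ) from rfl,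
          show M4 1 5 = (0:ℝ) from rfl,
          show M4 1 6 = (0:ℝ) from rfl,
          show M4 2 0 = (0:ℝ) from rfl,
          show M4 2 1 = (0:ℝ) from rfl,
          show M4 2 2 = (0:ℝ) from rfl,
          show M4 2 3 = (0:ℝ) from rfl,
          show M4 2 4 = (0:ℝ) from rfl,
          show M4 2 5 = (0:ℝ) from rfl,
          show M4 2 6 = (0:ℝ) from rfl,
          show M4 3 0 = (0:ℝ) from rfl,
          show M4 3 1 = (0:ℝ) from rfl,
          show M4 3 2 = (0:ℝ) from rfl,
          show M4 3 3 = (0:ℝ) from rfl,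
          show M4 3 4 = (0:ℝ) from rfl,
          show M4 3 5 = (0:ℝ) from rfl,
          show M4 3 6 = (0:ℝ) from rfl,
          show M4 4 0 = (0:ℝ) from rfl,
          show M4 4 1 = (0:ℝ) from rfl,
          show M4 4 2 = (0:ℝ) from rfl,
          show M4 4 3 = (0:ℝ) from rfl,
          show M4 4 4 = (0:ℝ) from rfl,
          show M4 4 5 = (0:ℝ) from rfl,
          show M4 4 6 = (0:ℝ) from rfl,
          show M4 5 0 = (0:ℝ) from rfl,
          show M4 5 1 = (0:ℝ) from rfl,
          show M4 5 2 = (0:ℝ) from rfl,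
          show M4 5 3 = (0:ℝ) from rfl,
          show M4 5 4 = (0:ℝ) from rfl,
          show M4 5 5 = (0:ℝ) from rfl,
          show M4 5 6 = (1:ℝ) from rfl,
          show M4 6 0 = (0:ℝ) from rfl,
          show M4 6 1 = (0:ℝ) from rfl,
          show M4 6 2 = (0:ℝ) from rfl,
          show M4 6 3 = (0:ℝ) from rfl,
          show M4 6 4 = (0:ℝ) from rfl,
          show M4 6 5 = (-1:ℝ) from rfl,
          show M4 6 6 = (0:ℝ) from rfl] <;>
        norm_num <;>
        linarith
  have hmem : ∀ Z : Matrix (Fin 7) (Fin 7) ℝ,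
      Z ∈ Submodule.span ℝ (Set.range ![M1, M2, M3, M4]) ↔
        Z ∈ g2 ∧ ∀ x ∈ plane12, Z *ᵥ x ∈ plane12 := fun Z => by
    rw [← SetLike.mem_coe, hset]; exact Iff.rfl
  refine ⟨Submodule.span ℝ (Set.range ![M1, M2, M3, M4]), hset, ?_, ?_⟩
  · -- bracket closure
    intro X hX Y hY
    obtain ⟨⟨hXT, hXphi⟩, hXpl⟩ := (hmem X).1 hX
    obtain ⟨⟨hYT, hYphi⟩, hYpl⟩ := (hmem Y).1 hY
    refine (hmem _).2 ⟨⟨?_, ?_⟩, ?_⟩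
    · rw [transpose_sub, transpose_mul, transpose_mul, hXT, hYT]
      noncomm_ring
    · intro u v w
      have h1 := hXphi (Y *ᵥ u) v w
      have h2 := hXphi u (Y *ᵥ v) w
      have h3 := hXphi u v (Y *ᵥ w)
      have h4 := hYphi (X *ᵥ u) v w
      have h5 := hYphi u (X *ᵥ v) w
      have h6 := hYphi u v (X *ᵥ w)
      rw [sub_mulVec, sub_mulVec, sub_mulVec, phi_sub1, phi_sub2, phi_sub3,
        ← mulVec_mulVec, ← mulVec_mulVec, ← mulVec_mulVec,
        ← mulVec_mulVec, ← mulVec_mulVec, ← mulVec_mulVec]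
      linarith
    · intro x hx
      obtain ⟨a2, a3, a4, a5, a6⟩ := hXpl (Y *ᵥ x) (hYpl x hx)
      obtain ⟨b2, b3, b4, b5, b6⟩ := hYpl (X *ᵥ x) (hXpl x hx)
      rw [mulVec_mulVec] at a2 a3 a4 a5 a6 b2 b3 b4 b5 b6
      rw [sub_mulVec]
      exact ⟨by simp [Pi.sub_apply, a2, b2], by simp [Pi.sub_apply, a3, b3],
        by simp [Pi.sub_apply, a4, b4], by simp [Pi.sub_apply, a5, b5],
        by simp [Pi.sub_apply, a6, b6]⟩
  · -- dimension
    have li : LinearIndependent ℝ ![M1, M2, M3, M4] := by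
      rw [Fintype.linearIndependent_iff]
      intro g hg
      rw [Fin.sum_univ_four] at hg
      simp only [Matrix.cons_val_zero, Matrix.cons_val_one, Matrix.head_cons,
        Matrix.cons_val_two, Matrix.tail_cons, Matrix.cons_val_three] at hg
      have h23 := congrFun (congrFun hg 2) 3
      have h26 := congrFun (congrFun hg 2) 6
      have h25 := congrFun (congrFun hg 2) 5
      have h56 := congrFun (congrFun hg 5) 6
      simp only [Matrix.add_apply, Matrix.smul_apply, smul_eq_mul, Matrix.zero_apply,
        show M1 2 3 = (1:ℝ) from rfl, show M2 2 3 = (0:ℝ) from rfl,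
        show M3 2 3 = (0:ℝ) from rfl, show M4 2 3 = (0:ℝ) from rfl,
        show M1 2 6 = (0:ℝ) from rfl, show M2 2 6 = (1:ℝ) from rfl,
        show M3 2 6 = (0:ℝ) from rfl, show M4 2 6 = (0:ℝ) from rfl,
        show M1 2 5 = (0:ℝ) from rfl, show M2 2 5 = (0:ℝ) from rfl,
        show M3 2 5 = (-1:ℝ) from rfl, show M4 2 5 = (0:ℝ) from rfl,
        show M1 5 6 = (0:ℝ) from rfl, show M2 5 6 = (0:ℝ) from rfl,
        show M3 5 6 = (0:ℝ) from rfl, show M4 5 6 = (1:ℝ) from rfl]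
        at h23 h26 h25 h56
      intro i
      fin_cases i <;> (try simp only [Fin.reduceFinMk]) <;> linarith
    rw [finrank_span_eq_card li]
    simp
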